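/- arXiv:1406.4432 — 4 statements merged into one kernel-verified Lean document; each statement's English description precedes it below -/
import Mathlib

section
/- Let $(\Upsilon_j)_{j\in\mathbb{N}}$ be non-negative reals and let $(\mathbb{A}_\nu)$, $(\mathbb{B}_\nu)$ be non-negative reals indexed by finitely supported multi-indices $\nu \in \mathfrak{F}$ satisfying $\mathbb{A}_\nu \le \sum_{j \in \mathrm{supp}(\nu)} \nu_j \Upsilon_j \mathbb{A}_{\nu - e_j} + \mathbb{B}_\nu$ for all $\nu$ (including $\nu = 0$). Then for every $\nu \in \mathfrak{F}$, $\mathbb{A}_\nu \le \sum_{m \le \nu} \binom{\nu}{m} |m|! \, \Upsilon^m \, \mathbb{B}_{\nu - m}$, where $\binom{\nu}{m} = \prod_{j} \binom{\nu_j}{m_j}$, $|m| = \sum_j m_j$, and $\Upsilon^m = \prod_j \Upsilon_j^{m_j}$. -/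
lemma sub_single_apply (ν : ℕ →₀ ℕ) (j k : ℕ) :
    (ν - Finsupp.single j 1 : ℕ →₀ ℕ) k = if k = j then ν j - 1 else ν k := by
  rw [Finsupp.tsub_apply, Finsupp.single_apply]
  by_cases h : k = j
  · subst h; simp
  · rw [if_neg h, if_neg (Ne.symm h)]; simp

lemma sub_support_subset (ν : ℕ →₀ ℕ) (j : ℕ) :
    (ν - Finsupp.single j 1).support ⊆ ν.support := by
  intro k hk
  rw [Finsupp.mem_support_iff] at hk ⊢
  rw [sub_single_apply] at hk
  intro h0
  by_cases h : k = j
  · subst h; simp [h0] at hk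
  · simp [h, h0] at hk

lemma degree_sub (m : ℕ →₀ ℕ) {j : ℕ} (hj : j ∈ m.support) :
    ((m - Finsupp.single j 1).sum fun _ n => n) + 1 = m.sum fun _ n => n := by
  have hle : Finsupp.single j 1 ≤ m :=
    Finsupp.single_le_iff.mpr (Nat.one_le_iff_ne_zero.mpr (Finsupp.mem_support_iff.mp hj))
  have h : (m - Finsupp.single j 1) + Finsupp.single j 1 = m := tsub_add_cancel_of_le hle
  calc ((m - Finsupp.single j 1).sum fun _ n => n) + 1
      = ((m - Finsupp.single j 1).sum fun _ n => n) + ((Finsupp.single j 1).sum fun _ n => n) := by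
        rw [Finsupp.sum_single_index]; rfl
    _ = ((m - Finsupp.single j 1) + Finsupp.single j 1).sum fun _ n => n := by
        rw [Finsupp.sum_add_index' (fun _ => rfl) (fun _ _ _ => rfl)]
    _ = m.sum fun _ n => n := by rw [h]

lemma choose_prod (ν m : ℕ →₀ ℕ) (hle : m ≤ ν) {j : ℕ} (hj : j ∈ m.support) :
    ν j * ∏ k ∈ (ν - Finsupp.single j 1).support,
        ((ν - Finsupp.single j 1 : ℕ →₀ ℕ) k).choose ((m - Finsupp.single j 1 : ℕ →₀ ℕ) k)
    = m j * ∏ k ∈ ν.support, (ν k).choose (m k) := by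
  have hle' : ∀ i, m i ≤ ν i := fun i => Finsupp.le_def.mp hle i
  have hmj : 1 ≤ m j := Nat.one_le_iff_ne_zero.mpr (Finsupp.mem_support_iff.mp hj)
  have hνj : 1 ≤ ν j := le_trans hmj (hle' j)
  have hjν : j ∈ ν.support := Finsupp.mem_support_iff.mpr (by omega)
  have hext : (∏ k ∈ (ν - Finsupp.single j 1).support,
        ((ν - Finsupp.single j 1 : ℕ →₀ ℕ) k).choose ((m - Finsupp.single j 1 : ℕ →₀ ℕ) k))
      = ∏ k ∈ ν.support,
        ((ν - Finsupp.single j 1 : ℕ →₀ ℕ) k).choose ((m - Finsupp.single j 1 : ℕ →₀ ℕ) k) := by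
    refine Finset.prod_subset (sub_support_subset ν j) (fun k _ hnk => ?_)
    rw [Finsupp.notMem_support_iff] at hnk
    have h2 : (m - Finsupp.single j 1 : ℕ →₀ ℕ) k = 0 := by
      rw [Finsupp.tsub_apply] at hnk ⊢
      have := hle' k; omega
    rw [hnk, h2]; rfl
  rw [hext, ← Finset.mul_prod_erase ν.support _ hjν, ← Finset.mul_prod_erase ν.support _ hjν]
  have hP : (∏ k ∈ ν.support.erase j,
        ((ν - Finsupp.single j 1 : ℕ →₀ ℕ) k).choose ((m - Finsupp.single j 1 : ℕ →₀ ℕ) k))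
      = ∏ k ∈ ν.support.erase j, (ν k).choose (m k) := by
    refine Finset.prod_congr rfl (fun k hk => ?_)
    have hkj : k ≠ j := Finset.ne_of_mem_erase hk
    rw [sub_single_apply, sub_single_apply, if_neg hkj, if_neg hkj]
  rw [hP, sub_single_apply, sub_single_apply, if_pos rfl, if_pos rfl, ← mul_assoc, ← mul_assoc]
  congr 1
  obtain ⟨n, hn⟩ : ∃ n, ν j = n + 1 := ⟨ν j - 1, by omega⟩
  obtain ⟨k, hk⟩ : ∃ k, m j = k + 1 := ⟨m j - 1, by omega⟩
  rw [hn, hk]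
  simp only [Nat.add_sub_cancel]
  have := Nat.add_one_mul_choose_eq n k
  rw [this]; ring

lemma pow_prod (Υ : ℕ → ℝ) (m : ℕ →₀ ℕ) {j : ℕ} (hj : j ∈ m.support) :
    Υ j * ∏ k ∈ (m - Finsupp.single j 1).support,
        Υ k ^ ((m - Finsupp.single j 1 : ℕ →₀ ℕ) k)
    = ∏ k ∈ m.support, Υ k ^ m k := by
  have hmj : 1 ≤ m j := Nat.one_le_iff_ne_zero.mpr (Finsupp.mem_support_iff.mp hj)
  have hext : (∏ k ∈ (m - Finsupp.single j 1).support,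
        Υ k ^ ((m - Finsupp.single j 1 : ℕ →₀ ℕ) k))
      = ∏ k ∈ m.support, Υ k ^ ((m - Finsupp.single j 1 : ℕ →₀ ℕ) k) := by
    refine Finset.prod_subset (sub_support_subset m j) (fun k _ hnk => ?_)
    rw [Finsupp.notMem_support_iff] at hnk
    rw [hnk, pow_zero]
  rw [hext, ← Finset.mul_prod_erase m.support _ hj, ← Finset.mul_prod_erase m.support _ hj]
  have hP : (∏ k ∈ m.support.erase j, Υ k ^ ((m - Finsupp.single j 1 : ℕ →₀ ℕ) k))
      = ∏ k ∈ m.support.erase j, Υ k ^ m k := by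
    refine Finset.prod_congr rfl (fun k hk => ?_)
    rw [sub_single_apply, if_neg (Finset.ne_of_mem_erase hk)]
  rw [hP, sub_single_apply, if_pos rfl, ← mul_assoc]
  congr 1
  have h1 : m j - 1 + 1 = m j := by omega
  calc Υ j * Υ j ^ (m j - 1) = Υ j ^ (m j - 1) * Υ j := mul_comm _ _
    _ = Υ j ^ (m j - 1 + 1) := (pow_succ _ _).symm
    _ = Υ j ^ m j := by rw [h1]

noncomputable def Cfn (Υ : ℕ → ℝ) (ν m : ℕ →₀ ℕ) : ℝ :=
  ((∏ j ∈ ν.support, (ν j).choose (m j) : ℕ) : ℝ) *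
  (Nat.factorial (m.sum fun _ n => n) : ℝ) *
  (∏ j ∈ m.support, Υ j ^ m j)

lemma Cfn_nonneg (Υ : ℕ → ℝ) (hΥ : ∀ j, 0 ≤ Υ j) (ν m : ℕ →₀ ℕ) : 0 ≤ Cfn Υ ν m := by
  unfold Cfn
  exact mul_nonneg (mul_nonneg (Nat.cast_nonneg _) (Nat.cast_nonneg _))
    (Finset.prod_nonneg fun k _ => pow_nonneg (hΥ k) _)

set_option maxHeartbeats 1000000 in
lemma term_eq (Υ : ℕ → ℝ) (ν m : ℕ →₀ ℕ) (hle : m ≤ ν) {j : ℕ} (hj : j ∈ m.support) :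
    (ν j : ℝ) * Υ j * Cfn Υ (ν - Finsupp.single j 1) (m - Finsupp.single j 1)
    = (m j : ℝ) * (((∏ k ∈ ν.support, (ν k).choose (m k) : ℕ) : ℝ) *
        (Nat.factorial ((m.sum fun _ n => n) - 1) : ℝ) *
        (∏ k ∈ m.support, Υ k ^ m k)) := by
  unfold Cfn
  have hfac : ((m - Finsupp.single j 1).sum fun _ n => n) = (m.sum fun _ n => n) - 1 := by
    have := degree_sub m hj; omega
  rw [hfac]
  have hch := choose_prod ν m hle hj
  have hpw := pow_prod Υ m hj
  have hchR : (ν j : ℝ) * ((∏ k ∈ (ν - Finsupp.single j 1).support,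
        ((ν - Finsupp.single j 1 : ℕ →₀ ℕ) k).choose
          ((m - Finsupp.single j 1 : ℕ →₀ ℕ) k) : ℕ) : ℝ)
      = (m j : ℝ) * ((∏ k ∈ ν.support, (ν k).choose (m k) : ℕ) : ℝ) := by
    exact_mod_cast congrArg (Nat.cast : ℕ → ℝ) hch
  linear_combination
    ((Nat.factorial ((m.sum fun _ n => n) - 1) : ℝ) *
      (Υ j * ∏ k ∈ (m - Finsupp.single j 1).support,
        Υ k ^ ((m - Finsupp.single j 1 : ℕ →₀ ℕ) k))) * hchR +
    ((m j : ℝ) * ((∏ k ∈ ν.support, (ν k).choose (m k) : ℕ) : ℝ) *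
      (Nat.factorial ((m.sum fun _ n => n) - 1) : ℝ)) * hpw

lemma inner_sum_identity (Υ : ℕ → ℝ) (ν m : ℕ →₀ ℕ) (hle : m ≤ ν) (hm0 : m ≠ 0) :
    ∑ j ∈ m.support, (ν j : ℝ) * Υ j *
      Cfn Υ (ν - Finsupp.single j 1) (m - Finsupp.single j 1) = Cfn Υ ν m := by
  rw [Finset.sum_congr rfl (fun j hj => term_eq Υ ν m hle hj), ← Finset.sum_mul]
  have hsum : ∑ j ∈ m.support, (m j : ℝ) = ((m.sum fun _ n => n : ℕ) : ℝ) := by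
    rw [Finsupp.sum]; push_cast; rfl
  rw [hsum]
  have hpos : 1 ≤ m.sum fun _ n => n := by
    obtain ⟨j, hj⟩ := Finsupp.support_nonempty_iff.mpr hm0
    calc 1 ≤ m j := Nat.one_le_iff_ne_zero.mpr (Finsupp.mem_support_iff.mp hj)
      _ ≤ ∑ k ∈ m.support, m k := Finset.single_le_sum (fun _ _ => Nat.zero_le _) hj
      _ = m.sum fun _ n => n := rfl
  unfold Cfn
  obtain ⟨s, hs⟩ : ∃ s, (m.sum fun _ n => n) = s + 1 := ⟨(m.sum fun _ n => n) - 1, by omega⟩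
  rw [hs]
  simp only [Nat.add_sub_cancel, Nat.factorial_succ]
  push_cast
  ring

lemma main_identity (Υ : ℕ → ℝ) (B : (ℕ →₀ ℕ) → ℝ) (ν : ℕ →₀ ℕ) :
    (∑ j ∈ ν.support, (ν j : ℝ) * Υ j *
      (∑ m ∈ Finset.Iic (ν - Finsupp.single j 1),
        Cfn Υ (ν - Finsupp.single j 1) m * B (ν - Finsupp.single j 1 - m))) + B ν
    = ∑ m ∈ Finset.Iic ν, Cfn Υ ν m * B (ν - m) := by
  have step1 : (∑ j ∈ ν.support, (ν j : ℝ) * Υ j *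
      (∑ m ∈ Finset.Iic (ν - Finsupp.single j 1),
        Cfn Υ (ν - Finsupp.single j 1) m * B (ν - Finsupp.single j 1 - m)))
      = ∑ j ∈ ν.support, ∑ m ∈ Finset.Iic (ν - Finsupp.single j 1),
        (ν j : ℝ) * Υ j * Cfn Υ (ν - Finsupp.single j 1) m
          * B (ν - Finsupp.single j 1 - m) := by
    refine Finset.sum_congr rfl (fun j _ => ?_)
    rw [Finset.mul_sum]
    exact Finset.sum_congr rfl (fun m _ => by ring)
  rw [step1, Finset.sum_sigma' ν.support (fun j => Finset.Iic (ν - Finsupp.single j 1))]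
  have step2 : ∑ p ∈ ν.support.sigma (fun j => Finset.Iic (ν - Finsupp.single j 1)),
      (ν p.1 : ℝ) * Υ p.1 * Cfn Υ (ν - Finsupp.single p.1 1) p.2
        * B (ν - Finsupp.single p.1 1 - p.2)
      = ∑ q ∈ (Finset.Iic ν).sigma (fun m => m.support),
      (ν q.2 : ℝ) * Υ q.2 * Cfn Υ (ν - Finsupp.single q.2 1) (q.1 - Finsupp.single q.2 1)
        * B (ν - q.1) := by
    refine Finset.sum_nbij'
      (fun p => ⟨p.2 + Finsupp.single p.1 1, p.1⟩)
      (fun q => ⟨q.2, q.1 - Finsupp.single q.2 1⟩) ?_ ?_ ?_ ?_ ?_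
    · rintro ⟨j, m⟩ hp
      rw [Finset.mem_sigma] at hp ⊢
      obtain ⟨hj, hm⟩ := hp
      have hνj : 1 ≤ ν j := Nat.one_le_iff_ne_zero.mpr (Finsupp.mem_support_iff.mp hj)
      have hej : Finsupp.single j 1 ≤ ν := Finsupp.single_le_iff.mpr hνj
      constructor
      · rw [Finset.mem_Iic]
        calc m + Finsupp.single j 1
            ≤ (ν - Finsupp.single j 1) + Finsupp.single j 1 :=
              add_le_add_left (Finset.mem_Iic.mp hm) _
          _ = ν := tsub_add_cancel_of_le hej
      · rw [Finsupp.mem_support_iff]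
        simp only [Finsupp.add_apply, Finsupp.single_eq_same]
        omega
    · rintro ⟨m, j⟩ hq
      rw [Finset.mem_sigma] at hq ⊢
      obtain ⟨hm, hj⟩ := hq
      rw [Finset.mem_Iic] at hm
      have hmj : 1 ≤ m j := Nat.one_le_iff_ne_zero.mpr (Finsupp.mem_support_iff.mp hj)
      have hνj : 1 ≤ ν j := le_trans hmj (Finsupp.le_def.mp hm j)
      constructor
      · exact Finsupp.mem_support_iff.mpr (by omega : ν j ≠ 0)
      · exact Finset.mem_Iic.mpr (tsub_le_tsub_right hm _)
    · rintro ⟨j, m⟩ _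
      simp only [add_tsub_cancel_right]
    · rintro ⟨m, j⟩ hq
      rw [Finset.mem_sigma] at hq
      have hmj : 1 ≤ m j :=
        Nat.one_le_iff_ne_zero.mpr (Finsupp.mem_support_iff.mp hq.2)
      have : (m - Finsupp.single j 1) + Finsupp.single j 1 = m :=
        tsub_add_cancel_of_le (Finsupp.single_le_iff.mpr hmj)
      simp only [this]
    · rintro ⟨j, m⟩ _
      simp only [add_tsub_cancel_right]
      congr 1
      rw [tsub_tsub, add_comm]
  rw [step2, Finset.sum_sigma]
  dsimp only
  have hzero : ∑ j ∈ (0 : ℕ →₀ ℕ).support,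
      (ν j : ℝ) * Υ j * Cfn Υ (ν - Finsupp.single j 1) (0 - Finsupp.single j 1)
        * B (ν - 0) = 0 := by simp
  have hC0 : Cfn Υ ν 0 * B (ν - 0) = B ν := by
    unfold Cfn; simp
  conv_lhs => rw [← Finset.add_sum_erase _ _ (Finset.mem_Iic.mpr (zero_le : 0 ≤ ν))]
  conv_rhs => rw [← Finset.add_sum_erase _ _ (Finset.mem_Iic.mpr (zero_le : 0 ≤ ν))]
  rw [hzero, zero_add, hC0, add_comm (B ν)]
  congr 1
  refine Finset.sum_congr rfl (fun m hm => ?_)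
  have hm0 : m ≠ 0 := Finset.ne_of_mem_erase hm
  have hle : m ≤ ν := Finset.mem_Iic.mp (Finset.mem_of_mem_erase hm)
  rw [← Finset.sum_mul, ← inner_sum_identity Υ ν m hle hm0, Finset.sum_mul]


/-- Lemma (recursion bound for multi-index sequences): if
`A ν ≤ ∑_{j ∈ supp ν} ν_j Υ_j A_{ν - e_j} + B ν` for all finitely supported
multi-indices `ν`, then `A ν ≤ ∑_{m ≤ ν} binom(ν,m) |m|! Υ^m B_{ν-m}`. -/
theorem multiindex_recursion_bound
    (Υ : ℕ → ℝ) (A B : (ℕ →₀ ℕ) → ℝ)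
    (hΥ : ∀ j, 0 ≤ Υ j) (hA : ∀ ν, 0 ≤ A ν) (hB : ∀ ν, 0 ≤ B ν)
    (hrec : ∀ ν : ℕ →₀ ℕ,
      A ν ≤ (∑ j ∈ ν.support, (ν j : ℝ) * Υ j * A (ν - Finsupp.single j 1)) + B ν) :
    ∀ ν : ℕ →₀ ℕ,
      A ν ≤ ∑ m ∈ Finset.Iic ν,
        ((∏ j ∈ ν.support, (ν j).choose (m j) : ℕ) : ℝ) *
        (Nat.factorial (m.sum fun _ n => n) : ℝ) *
        (∏ j ∈ m.support, Υ j ^ m j) * B (ν - m) := by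
  suffices H : ∀ n : ℕ, ∀ ν : ℕ →₀ ℕ, (ν.sum fun _ k => k) = n →
      A ν ≤ ∑ m ∈ Finset.Iic ν, Cfn Υ ν m * B (ν - m) by
    intro ν
    exact H _ ν rfl
  intro n
  induction n using Nat.strong_induction_on with
  | _ n IH =>
    intro ν hν
    calc A ν ≤ (∑ j ∈ ν.support, (ν j : ℝ) * Υ j * A (ν - Finsupp.single j 1)) + B ν :=
          hrec ν
      _ ≤ (∑ j ∈ ν.support, (ν j : ℝ) * Υ j *
            (∑ m ∈ Finset.Iic (ν - Finsupp.single j 1),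
              Cfn Υ (ν - Finsupp.single j 1) m * B (ν - Finsupp.single j 1 - m))) + B ν := by
          apply add_le_add_left
          apply Finset.sum_le_sum
          intro j hj
          have hd : ((ν - Finsupp.single j 1).sum fun _ k => k) < n := by
            have := degree_sub ν hj; omega
          exact mul_le_mul_of_nonneg_left (IH _ hd _ rfl)
            (mul_nonneg (Nat.cast_nonneg _) (hΥ j))
      _ = _ := main_identity Υ B ν
end

section
/- For any finitely supported multi-index $m \in \mathbb{N}_0^{\mathbb{N}}$, one has $\sum_{m' \le m} \binom{m}{m'} |m'|! \, |m - m'|! = (|m| + 1)!$, where $\binom{m}{m'} = \prod_j \binom{m_j}{m'_j}$ and $|m| = \sum_j m_j$. -/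
open Finset

/-- Vandermonde-type identity for finsupps. -/
lemma vandermonde_aux (m : ℕ →₀ ℕ) (k : ℕ) :
    ∑ m' ∈ (Finset.Iic m).filter (fun m' => (m'.sum fun _ n => n) = k),
      ∏ j ∈ m.support, (m j).choose (m' j)
    = (m.sum fun _ n => n).choose k := by
  classical
  set s := m.support with hs
  set n := m.sum fun _ x => x with hn
  have hns : n = ∑ j ∈ s, m j := rfl
  -- power series computation
  have key := PowerSeries.coeff_prod (R := ℕ)
    (fun j => (((Polynomial.X + 1 : Polynomial ℕ) ^ (m j) : Polynomial ℕ) : PowerSeries ℕ)) k s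
  have hprod : (∏ j ∈ s, (((Polynomial.X + 1 : Polynomial ℕ) ^ (m j) : Polynomial ℕ) :
      PowerSeries ℕ)) = (((Polynomial.X + 1 : Polynomial ℕ) ^ n : Polynomial ℕ) :
      PowerSeries ℕ) := by
    have h1 : (∏ j ∈ s, ((Polynomial.X + 1 : Polynomial ℕ) ^ (m j))) =
        (Polynomial.X + 1 : Polynomial ℕ) ^ n := by
      rw [Finset.prod_pow_eq_pow_sum, ← hns]
    rw [← h1]
    exact (map_prod (Polynomial.coeToPowerSeries.ringHom (R := ℕ)) _ _).symm
  have hcoeff : ∀ a b : ℕ, (PowerSeries.coeff (R := ℕ) b)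
      (((Polynomial.X + 1 : Polynomial ℕ) ^ a : Polynomial ℕ) : PowerSeries ℕ) = a.choose b := by
    intro a b
    rw [Polynomial.coeff_coe, Polynomial.coeff_X_add_one_pow, Nat.cast_id]
  rw [hprod, hcoeff] at key
  -- so n.choose k = ∑ over finsuppAntidiag
  have key2 : (n.choose k : ℕ) =
      ∑ l ∈ finsuppAntidiag s k, ∏ i ∈ s, (m i).choose (l i) := by
    rw [key]
    exact Finset.sum_congr rfl fun l _ => Finset.prod_congr rfl fun i _ => hcoeff _ _
  rw [key2]
  -- restrict to l ≤ m : the other terms vanish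
  have hAB : (finsuppAntidiag s k).filter (fun l => l ≤ m)
      = (Finset.Iic m).filter (fun m' => (m'.sum fun _ x => x) = k) := by
    ext l
    simp only [Finset.mem_filter, mem_finsuppAntidiag', Finset.mem_Iic]
    constructor
    · rintro ⟨⟨h1, _⟩, h3⟩
      exact ⟨h3, h1⟩
    · rintro ⟨h1, h2⟩
      exact ⟨⟨h2, hs ▸ Finsupp.support_mono h1⟩, h1⟩
  have h1 : ∑ l ∈ (finsuppAntidiag s k).filter (fun l => l ≤ m),
      ∏ i ∈ s, (m i).choose (l i) = ∑ l ∈ finsuppAntidiag s k, ∏ i ∈ s, (m i).choose (l i) := by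
    refine Finset.sum_filter_of_ne ?_
    intro l hl hne
    by_contra hlm
    apply hne
    rw [Finsupp.le_def, not_forall] at hlm
    obtain ⟨j, hj⟩ := hlm
    push_neg at hj
    have hjs : j ∈ s := by
      rw [mem_finsuppAntidiag'] at hl
      exact hl.2 (Finsupp.mem_support_iff.2 (by omega))
    exact Finset.prod_eq_zero hjs (Nat.choose_eq_zero_of_lt hj)
  rw [← h1]
  exact Finset.sum_congr hAB.symm fun _ _ => rfl

/-- For any finitely supported multi-index `m`,
`∑_{m' ≤ m} binom(m, m') |m'|! |m - m'|! = (|m| + 1)!`. -/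
theorem multiindex_factorial_sum (m : ℕ →₀ ℕ) :
    ∑ m' ∈ Finset.Iic m,
      (∏ j ∈ m.support, (m j).choose (m' j)) *
      Nat.factorial (m'.sum fun _ n => n) *
      Nat.factorial ((m - m').sum fun _ n => n)
    = Nat.factorial ((m.sum fun _ n => n) + 1) := by
  classical
  set n := m.sum fun _ x => x with hn
  -- for m' ≤ m, |m'| + |m - m'| = n
  have hsplit : ∀ m' ∈ Finset.Iic m,
      (m'.sum fun _ x => x) + ((m - m').sum fun _ x => x) = n := by
    intro m' hm'
    rw [Finset.mem_Iic] at hm'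
    have h : m' + (m - m') = m := by
      ext j
      have := Finsupp.le_def.1 hm' j
      simp [Finsupp.tsub_apply]
      omega
    have hadd : ((m' + (m - m')).sum fun _ x => x)
        = (m'.sum fun _ x => x) + ((m - m').sum fun _ x => x) :=
      Finsupp.sum_add_index' (fun _ => rfl) (fun _ _ _ => rfl)
    rw [h] at hadd
    rw [hn]
    omega
  have hmaps : ∀ m' ∈ Finset.Iic m, (m'.sum fun _ x => x) ∈ Finset.range (n + 1) := by
    intro m' hm'
    have := hsplit m' hm'
    rw [Finset.mem_range]
    omega
  rw [← Finset.sum_fiberwise_of_maps_to hmaps]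
  have : ∀ k ∈ Finset.range (n + 1),
      ∑ m' ∈ (Finset.Iic m).filter (fun m' => (m'.sum fun _ x => x) = k),
        (∏ j ∈ m.support, (m j).choose (m' j)) *
        Nat.factorial (m'.sum fun _ x => x) *
        Nat.factorial ((m - m').sum fun _ x => x)
      = n.choose k * (Nat.factorial k * Nat.factorial (n - k)) := by
    intro k hk
    rw [← vandermonde_aux m k, Finset.sum_mul]
    refine Finset.sum_congr rfl fun m' hm' => ?_
    rw [Finset.mem_filter] at hm'
    obtain ⟨hm'1, hm'2⟩ := hm'
    have h2 := hsplit m' hm'1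
    rw [hm'2]
    have : ((m - m').sum fun _ x => x) = n - k := by omega
    rw [this, mul_assoc]
  rw [Finset.sum_congr rfl this]
  have : ∀ k ∈ Finset.range (n + 1),
      n.choose k * (Nat.factorial k * Nat.factorial (n - k)) = Nat.factorial n := by
    intro k hk
    rw [Finset.mem_range] at hk
    have := Nat.choose_mul_factorial_mul_factorial (Nat.lt_succ_iff.1 hk)
    rw [← mul_assoc]
    exact this
  rw [Finset.sum_congr rfl this, Finset.sum_const, Finset.card_range, smul_eq_mul,
    Nat.factorial_succ]
end

section
/- For any finitely supported multi-index $\nu \in \mathbb{N}_0^{\mathbb{N}}$, one has $\sum_{m \le \nu} \binom{\nu}{m} (|m|+1)! \, (|\nu - m| + 1)! = (|\nu| + 3)!/6$. -/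
open Finset

/-- Decompose a sum over `Iic (single a b + ψ)` when `ψ a = 0`. -/
lemma sum_Iic_single_add {M : Type*} [AddCommMonoid M] (a b : ℕ) (ψ : ℕ →₀ ℕ) (ha : ψ a = 0)
    (F : (ℕ →₀ ℕ) → M) :
    ∑ m ∈ Finset.Iic (Finsupp.single a b + ψ), F m
      = ∑ p ∈ Finset.range (b + 1) ×ˢ Finset.Iic ψ, F (Finsupp.single a p.1 + p.2) := by
  refine Finset.sum_bij' (fun m _ => (m a, m.erase a))
    (fun p _ => Finsupp.single a p.1 + p.2) ?_ ?_ ?_ ?_ ?_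
  · intro m hm
    rw [Finset.mem_Iic, Finsupp.le_def] at hm
    rw [Finset.mem_product, Finset.mem_range, Finset.mem_Iic, Finsupp.le_def]
    constructor
    · have := hm a
      simp only [Finsupp.add_apply, Finsupp.single_eq_same, ha, add_zero] at this
      omega
    · intro i
      rcases eq_or_ne i a with rfl | hia
      · simp
      · have := hm i
        simpa [Finsupp.erase_apply, hia, Finsupp.single_apply, Ne.symm hia] using this
  · intro p hp
    rw [Finset.mem_product, Finset.mem_range, Finset.mem_Iic, Finsupp.le_def] at hp
    rw [Finset.mem_Iic, Finsupp.le_def]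
    intro i
    have h2 := hp.2 i
    have h1 := hp.1
    simp only [Finsupp.add_apply, Finsupp.single_apply]
    split_ifs with h
    · subst h
      omega
    · omega
  · intro m _
    exact Finsupp.single_add_erase a m
  · intro p hp
    rw [Finset.mem_product, Finset.mem_range, Finset.mem_Iic, Finsupp.le_def] at hp
    have hpa : p.2 a = 0 := by have := hp.2 a; omega
    have h1 : (Finsupp.single a p.1 + p.2) a = p.1 := by
      simp [hpa]
    have h2 : (Finsupp.single a p.1 + p.2).erase a = p.2 := by
      ext i
      rcases eq_or_ne i a with rfl | hia
      · simp [hpa]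
      · simp [Finsupp.erase_apply, hia, Finsupp.single_apply, Ne.symm hia]
    rw [h1, h2]
  · intro m _
    exact congrArg F (Finsupp.single_add_erase a m).symm

/-- Vandermonde collapse of the double sum. -/
lemma collapse_double_sum (f g : ℕ → ℝ) (b N : ℕ) :
    ∑ k ∈ Finset.range (b + 1), ∑ j ∈ Finset.range (N + 1),
      ((b.choose k * N.choose j : ℕ) : ℝ) * f (k + j) * g ((b - k) + (N - j))
    = ∑ t ∈ Finset.range (b + N + 1), (((b + N).choose t : ℕ) : ℝ) * f t * g (b + N - t) := by
  have hR : ∀ t, (((b + N).choose t : ℕ) : ℝ) * f t * g (b + N - t)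
      = ∑ k ∈ Finset.range (t + 1),
          ((b.choose k * N.choose (t - k) : ℕ) : ℝ) * f t * g (b + N - t) := by
    intro t
    rw [Nat.add_choose_eq, Finset.Nat.sum_antidiagonal_eq_sum_range_succ_mk]
    rw [← Finset.sum_mul, ← Finset.sum_mul]
    push_cast
    ring
  simp_rw [hR]
  rw [Finset.sum_sigma', Finset.sum_sigma']
  refine Finset.sum_bij_ne_zero (fun x _ _ => ⟨x.1 + x.2, x.1⟩) ?_ ?_ ?_ ?_
  · rintro ⟨k, j⟩ hx _
    simp only [Finset.mem_sigma, Finset.mem_range] at hx ⊢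
    omega
  · rintro ⟨k₁, j₁⟩ h₁ h₁' ⟨k₂, j₂⟩ h₂ h₂' h
    simp only [Sigma.mk.inj_iff, heq_eq_eq] at h ⊢
    omega
  · rintro ⟨t, k⟩ ht hne
    simp only [Finset.mem_sigma, Finset.mem_range] at ht
    have hc : b.choose k * N.choose (t - k) ≠ 0 := by
      intro h
      apply hne
      rw [h]
      simp
    have hkb : k ≤ b := by
      by_contra h
      exact hc (by simp [Nat.choose_eq_zero_of_lt (by omega : b < k)])
    have hjN : t - k ≤ N := by
      by_contra h
      exact hc (by simp [Nat.choose_eq_zero_of_lt (by omega : N < t - k)])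
    have hkt : k ≤ t := by omega
    refine ⟨⟨k, t - k⟩, ?_, ?_, ?_⟩
    · simp only [Finset.mem_sigma, Finset.mem_range]; omega
    · have e1 : k + (t - k) = t := by omega
      have e2 : (b - k) + (N - (t - k)) = b + N - t := by omega
      simpa [e1, e2] using hne
    · simp only [Sigma.mk.inj_iff, heq_eq_eq]
      exact ⟨by omega, trivial⟩
  · rintro ⟨k, j⟩ hx hne
    simp only [Finset.mem_sigma, Finset.mem_range] at hx
    have hc : b.choose k * N.choose j ≠ 0 := by
      intro h
      apply hne
      rw [h]
      simp
    have hkb : k ≤ b := by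
      by_contra h
      exact hc (by simp [Nat.choose_eq_zero_of_lt (by omega : b < k)])
    have hjN : j ≤ N := by
      by_contra h
      exact hc (by simp [Nat.choose_eq_zero_of_lt (by omega : N < j)])
    have e1 : k + j - k = j := by omega
    have e2 : (b - k) + (N - j) = b + N - (k + j) := by omega
    rw [e1, e2]

/-- Reduction of the multi-index sum to a single binomial sum. -/
lemma vander (ν : ℕ →₀ ℕ) : ∀ f g : ℕ → ℝ,
    ∑ m ∈ Finset.Iic ν,
      ((∏ j ∈ ν.support, (ν j).choose (m j) : ℕ) : ℝ) *
        f (m.sum fun _ n => n) * g ((ν - m).sum fun _ n => n)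
    = ∑ k ∈ Finset.range ((ν.sum fun _ n => n) + 1),
        (((ν.sum fun _ n => n).choose k : ℕ) : ℝ) * f k * g ((ν.sum fun _ n => n) - k) := by
  induction ν using Finsupp.induction with
  | zero =>
    intro f g
    have h : Finset.Iic (0 : ℕ →₀ ℕ) = {0} := by
      ext m
      simp [Finset.mem_Iic]
    simp [h, Finsupp.sum]
  | single_add a b ψ hψa hb IH =>
    intro f g
    have hψa0 : ψ a = 0 := Finsupp.notMem_support_iff.mp hψa
    set N := ψ.sum (fun _ n => n) with hN
    have hsum : ((Finsupp.single a b + ψ).sum fun _ n => n) = b + N := by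
      rw [Finsupp.sum_add_index' (fun _ => rfl) (fun _ _ _ => rfl),
        Finsupp.sum_single_index rfl]
    rw [sum_Iic_single_add a b ψ hψa0, Finset.sum_product, hsum]
    have hsupp : (Finsupp.single a b + ψ).support = insert a ψ.support := by
      rw [Finsupp.support_add_eq, Finsupp.support_single_ne_zero a hb]
      · rfl
      · rw [Finsupp.support_single_ne_zero a hb]
        simpa using hψa
    have key : ∀ k ∈ Finset.range (b + 1), ∀ m' ∈ Finset.Iic ψ,
        ((∏ j ∈ (Finsupp.single a b + ψ).support,
            ((Finsupp.single a b + ψ) j).choose ((Finsupp.single a k + m') j) : ℕ) : ℝ) *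
          f ((Finsupp.single a k + m').sum fun _ n => n) *
          g (((Finsupp.single a b + ψ) - (Finsupp.single a k + m')).sum fun _ n => n)
        = (b.choose k : ℝ) *
          (((∏ j ∈ ψ.support, (ψ j).choose (m' j) : ℕ) : ℝ) *
            f (k + (m'.sum fun _ n => n)) * g ((b - k) + ((ψ - m').sum fun _ n => n))) := by
      intro k hk m' hm'
      rw [Finset.mem_range] at hk
      rw [Finset.mem_Iic, Finsupp.le_def] at hm'
      have hm'a : m' a = 0 := by have := hm' a; omega
      have hprod : (∏ j ∈ (Finsupp.single a b + ψ).support,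
          ((Finsupp.single a b + ψ) j).choose ((Finsupp.single a k + m') j))
          = b.choose k * ∏ j ∈ ψ.support, (ψ j).choose (m' j) := by
        rw [hsupp, Finset.prod_insert (by simpa using hψa)]
        congr 1
        · simp [hψa0, hm'a]
        · refine Finset.prod_congr rfl fun j hj => ?_
          have hja : j ≠ a := by rintro rfl; exact hψa hj
          simp [Finsupp.single_apply, Ne.symm hja]
      have hmsum : ((Finsupp.single a k + m').sum fun _ n => n) = k + (m'.sum fun _ n => n) := by
        rw [Finsupp.sum_add_index' (fun _ => rfl) (fun _ _ _ => rfl),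
          Finsupp.sum_single_index rfl]
      have hdiff : (Finsupp.single a b + ψ) - (Finsupp.single a k + m')
          = Finsupp.single a (b - k) + (ψ - m') := by
        ext i
        rcases eq_or_ne i a with rfl | hia
        · simp [Finsupp.sub_apply, hψa0, hm'a]
        · simp [Finsupp.tsub_apply, Finsupp.add_apply, Finsupp.single_apply, Ne.symm hia]
      have hdsum : (((Finsupp.single a b + ψ) - (Finsupp.single a k + m')).sum fun _ n => n)
          = (b - k) + ((ψ - m').sum fun _ n => n) := by
        rw [hdiff, Finsupp.sum_add_index' (fun _ => rfl) (fun _ _ _ => rfl),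
          Finsupp.sum_single_index rfl]
      rw [hprod, hmsum, hdsum]
      push_cast
      ring
    rw [Finset.sum_congr rfl (fun k hk => Finset.sum_congr rfl (fun m' hm' => key k hk m' hm'))]
    have step : ∀ k ∈ Finset.range (b + 1),
        ∑ m' ∈ Finset.Iic ψ, (b.choose k : ℝ) *
          (((∏ j ∈ ψ.support, (ψ j).choose (m' j) : ℕ) : ℝ) *
            f (k + (m'.sum fun _ n => n)) * g ((b - k) + ((ψ - m').sum fun _ n => n)))
        = ∑ j ∈ Finset.range (N + 1),
            ((b.choose k * N.choose j : ℕ) : ℝ) * f (k + j) * g ((b - k) + (N - j)) := by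
      intro k hk
      rw [← Finset.mul_sum, IH (fun t => f (k + t)) (fun t => g ((b - k) + t))]
      rw [Finset.mul_sum]
      refine Finset.sum_congr rfl fun j hj => ?_
      push_cast
      ring
    rw [Finset.sum_congr rfl step]
    exact collapse_double_sum f g b N

lemma six_mul_sum (n : ℕ) :
    6 * ∑ k ∈ Finset.range (n + 1), (k + 1) * (n - k + 1) = (n + 1) * (n + 2) * (n + 3) := by
  induction n with
  | zero => simp
  | succ n IH =>
    have split : ∀ k ∈ Finset.range (n + 2), (k + 1) * (n + 1 - k + 1)
        = (if k ≤ n then (k + 1) * (n - k + 1) else 0) + (k + 1) := by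
      intro k hk
      rw [Finset.mem_range] at hk
      rcases le_or_gt k n with h | h
      · simp only [if_pos h]
        have : n + 1 - k = (n - k) + 1 := by omega
        rw [this]; ring
      · have hk1 : k = n + 1 := by omega
        simp [hk1, Nat.sub_self]
    rw [Finset.sum_congr rfl split, Finset.sum_add_distrib]
    rw [← Finset.sum_filter]
    have hfil : (Finset.range (n + 2)).filter (fun k => k ≤ n) = Finset.range (n + 1) := by
      ext k
      simp only [Finset.mem_filter, Finset.mem_range]
      omega
    rw [hfil]
    have gauss : 2 * ∑ k ∈ Finset.range (n + 2), (k + 1) = (n + 2) * (n + 3) := by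
      have : ∀ m : ℕ, 2 * ∑ k ∈ Finset.range m, (k + 1) = m * (m + 1) := by
        intro m
        induction m with
        | zero => simp
        | succ m IHm =>
          rw [Finset.sum_range_succ, Nat.mul_add, IHm]
          ring
      rw [this (n + 2)]
    have : 6 * ∑ k ∈ Finset.range (n + 2), (k + 1)
        = 3 * (2 * ∑ k ∈ Finset.range (n + 2), (k + 1)) := by ring
    rw [Nat.mul_add, IH, this, gauss]
    ring

lemma natkey (n : ℕ) :
    6 * ∑ k ∈ Finset.range (n + 1),
      n.choose k * Nat.factorial (k + 1) * Nat.factorial (n - k + 1)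
    = Nat.factorial (n + 3) := by
  have hterm : ∀ k ∈ Finset.range (n + 1),
      n.choose k * Nat.factorial (k + 1) * Nat.factorial (n - k + 1)
      = Nat.factorial n * ((k + 1) * (n - k + 1)) := by
    intro k hk
    rw [Finset.mem_range] at hk
    have hkn : k ≤ n := by omega
    have base := Nat.choose_mul_factorial_mul_factorial hkn
    calc n.choose k * Nat.factorial (k + 1) * Nat.factorial (n - k + 1)
        = n.choose k * ((k + 1) * Nat.factorial k) * ((n - k + 1) * Nat.factorial (n - k)) := by
          rw [Nat.factorial_succ, Nat.factorial_succ]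
      _ = (n.choose k * Nat.factorial k * Nat.factorial (n - k)) * ((k + 1) * (n - k + 1)) := by
          ring
      _ = Nat.factorial n * ((k + 1) * (n - k + 1)) := by rw [base]
  rw [Finset.sum_congr rfl hterm, ← Finset.mul_sum]
  have : 6 * (Nat.factorial n * ∑ k ∈ Finset.range (n + 1), (k + 1) * (n - k + 1))
      = Nat.factorial n * (6 * ∑ k ∈ Finset.range (n + 1), (k + 1) * (n - k + 1)) := by ring
  rw [this, six_mul_sum]
  calc Nat.factorial n * ((n + 1) * (n + 2) * (n + 3))
      = (n + 3) * ((n + 2) * ((n + 1) * Nat.factorial n)) := by ring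
    _ = Nat.factorial (n + 3) := by
        rw [← Nat.factorial_succ, ← Nat.factorial_succ, ← Nat.factorial_succ]

/-- For any finitely supported multi-index `ν`,
`∑_{m ≤ ν} binom(ν,m) (|m|+1)! (|ν-m|+1)! = (|ν|+3)!/6`. -/
theorem multiindex_factorial_sum_shifted (ν : ℕ →₀ ℕ) :
    ∑ m ∈ Finset.Iic ν,
      ((∏ j ∈ ν.support, (ν j).choose (m j) : ℕ) : ℝ) *
      (Nat.factorial ((m.sum fun _ n => n) + 1) : ℝ) *
      (Nat.factorial (((ν - m).sum fun _ n => n) + 1) : ℝ)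
    = (Nat.factorial ((ν.sum fun _ n => n) + 3) : ℝ) / 6 := by
  set n := ν.sum (fun _ n => n) with hn
  have h := vander ν (fun t => (Nat.factorial (t + 1) : ℝ)) (fun t => (Nat.factorial (t + 1) : ℝ))
  rw [h]
  have hnat := natkey n
  have : (∑ k ∈ Finset.range (n + 1),
      ((n.choose k : ℕ) : ℝ) * (Nat.factorial (k + 1) : ℝ) * (Nat.factorial (n - k + 1) : ℝ))
      = ((∑ k ∈ Finset.range (n + 1),
          n.choose k * Nat.factorial (k + 1) * Nat.factorial (n - k + 1) : ℕ) : ℝ) := by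
    push_cast
    rfl
  rw [this]
  rw [eq_div_iff (by norm_num : (6 : ℝ) ≠ 0), ← hnat]
  push_cast
  ring
end

section
/- Let $(\beta_j)_{j \ge 1}$ be a non-increasing sequence of non-negative reals with $\sum_{j \ge 1} \beta_j^{p} < \infty$ for some $0 < p < 1$. Then for every $s \in \mathbb{N}$, the tail sum satisfies $\sum_{j \ge s+1} \beta_j \le \min\left(\frac{1}{1/p - 1}, 1\right) \left(\sum_{j \ge 1} \beta_j^p\right)^{1/p} s^{-(1/p - 1)}$. -/
open Real

lemma tail_aux_tele (a r : ℝ) (ha : 1 ≤ a) (hr : 0 < r) :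
    r * (a + 1) ^ (-(r + 1)) ≤ a ^ (-r) - (a + 1) ^ (-r) := by
  have ha0 : (0:ℝ) < a := lt_of_lt_of_le one_pos ha
  have ha1 : (0:ℝ) < a + 1 := by linarith
  have hA : (0:ℝ) < a ^ r := Real.rpow_pos_of_pos ha0 r
  have hC : (0:ℝ) < (a + 1) ^ r := Real.rpow_pos_of_pos ha1 r
  have key : (a + 1 + r) * a ^ r ≤ (a + 1) ^ r * (a + 1) := by
    have hb : 1 + (1 + r) * (1 / a) ≤ (1 + 1 / a) ^ (1 + r) :=
      one_add_mul_self_le_rpow_one_add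
        (by
          have h0 : (0:ℝ) ≤ 1 / a := by positivity
          linarith) (by linarith)
    have h2 : ((1:ℝ) + 1 / a) ^ (1 + r) = (a + 1) ^ (1 + r) / a ^ (1 + r) := by
      rw [show (1:ℝ) + 1 / a = (a + 1) / a by field_simp, Real.div_rpow ha1.le ha0.le]
    have h3 : a ^ (1 + r) = a * a ^ r := by
      rw [Real.rpow_add ha0, Real.rpow_one]
    have h4 : (a + 1) ^ (1 + r) = (a + 1) ^ r * (a + 1) := by
      rw [add_comm (1:ℝ) r, Real.rpow_add ha1, Real.rpow_one]
    rw [h2, h3, h4, le_div_iff₀ (by positivity)] at hb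
    calc (a + 1 + r) * a ^ r = (1 + (1 + r) * (1 / a)) * (a * a ^ r) := by
          field_simp; ring
      _ ≤ (a + 1) ^ r * (a + 1) := hb
  rw [Real.rpow_neg ha0.le, Real.rpow_neg ha1.le, Real.rpow_neg ha1.le,
    Real.rpow_add ha1, Real.rpow_one, ← div_eq_mul_inv, inv_eq_one_div, inv_eq_one_div,
    div_sub_div _ _ (ne_of_gt hA) (ne_of_gt hC),
    div_le_div_iff₀ (by positivity) (by positivity)]
  nlinarith [mul_le_mul_of_nonneg_right key hC.le]

/-- Tail bound for a non-increasing `p`-summable sequence (`β j` denotes `β_{j+1}`):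
`∑_{j ≥ s+1} β_j ≤ min(1/(1/p-1), 1) (∑_{j≥1} β_j^p)^{1/p} s^{-(1/p-1)}`. -/
theorem tail_sum_bound (β : ℕ → ℝ) (p : ℝ) (hp : 0 < p) (hp1 : p < 1)
    (hnn : ∀ j, 0 ≤ β j) (hmono : ∀ j k, j ≤ k → β k ≤ β j)
    (hsum : Summable fun j => β j ^ p) (s : ℕ) (hs : 1 ≤ s) :
    ∑' j : ℕ, β (s + j)
      ≤ min (1 / (1 / p - 1)) 1 * (∑' j : ℕ, β j ^ p) ^ (1 / p) *
        (s : ℝ) ^ (-(1 / p - 1)) := by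
  set T := ∑' j : ℕ, β j ^ p with hTdef
  have hT0 : 0 ≤ T := tsum_nonneg fun j => Real.rpow_nonneg (hnn j) p
  set B := T ^ (1 / p) with hBdef
  have hB0 : 0 ≤ B := Real.rpow_nonneg hT0 _
  have hq : 1 < 1 / p := (one_lt_one_div hp hp1)
  set r := 1 / p - 1 with hrdef
  have hr0 : 0 < r := by rw [hrdef]; linarith
  have hs1 : (1:ℝ) ≤ (s:ℝ) := by exact_mod_cast hs
  -- pointwise bound β j ≤ B (j+1)^{-1/p}
  have h1 : ∀ j : ℕ, ((j:ℝ) + 1) * β j ^ p ≤ T := by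
    intro j
    calc ((j:ℝ) + 1) * β j ^ p = ∑ _i ∈ Finset.range (j + 1), β j ^ p := by
          rw [Finset.sum_const, Finset.card_range]; push_cast; ring
      _ ≤ ∑ i ∈ Finset.range (j + 1), β i ^ p :=
          Finset.sum_le_sum fun i hi =>
            Real.rpow_le_rpow (hnn j)
              (hmono i j (Nat.lt_succ_iff.mp (Finset.mem_range.mp hi))) hp.le
      _ ≤ T := Summable.sum_le_tsum _ (fun i _ => Real.rpow_nonneg (hnn i) p) hsum
  have h2 : ∀ j : ℕ, β j ≤ B * ((j:ℝ) + 1) ^ (-(1 / p)) := by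
    intro j
    have hj1 : (0:ℝ) < (j:ℝ) + 1 := by positivity
    have hle : β j ^ p ≤ T / ((j:ℝ) + 1) := by
      rw [le_div_iff₀ hj1]
      nlinarith [h1 j]
    calc β j = (β j ^ p) ^ (1 / p) := by
          rw [← Real.rpow_mul (hnn j), mul_one_div_cancel hp.ne', Real.rpow_one]
      _ ≤ (T / ((j:ℝ) + 1)) ^ (1 / p) :=
          Real.rpow_le_rpow (Real.rpow_nonneg (hnn j) p) hle (by positivity)
      _ = B * ((j:ℝ) + 1) ^ (-(1 / p)) := by
          rw [Real.div_rpow hT0 hj1.le, Real.rpow_neg hj1.le, div_eq_mul_inv, hBdef]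
  -- summability of tails
  have hsum' : Summable (fun j : ℕ => β (s + j) ^ p) := by
    have h := (summable_nat_add_iff s).2 hsum
    refine h.congr fun j => ?_
    simp [add_comm]
  have htail : ∑' j : ℕ, β (s + j) ^ p ≤ T :=
    Summable.tsum_le_tsum_of_inj (fun j => s + j) (add_right_injective s)
      (fun c _ => Real.rpow_nonneg (hnn c) p) (fun j => le_rfl) hsum' hsum
  have hstep1 : ∀ j : ℕ, β (s + j) ≤ β s ^ (1 - p) * β (s + j) ^ p := by
    intro j
    have heq : β (s + j) = β (s + j) ^ p * β (s + j) ^ (1 - p) := by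
      rw [← Real.rpow_add' (hnn _) (by norm_num : p + (1 - p) ≠ 0)]
      norm_num
    calc β (s + j) = β (s + j) ^ p * β (s + j) ^ (1 - p) := heq
      _ ≤ β (s + j) ^ p * β s ^ (1 - p) := by
          apply mul_le_mul_of_nonneg_left
            (Real.rpow_le_rpow (hnn _) (hmono s (s + j) (Nat.le_add_right _ _)) (by linarith))
            (Real.rpow_nonneg (hnn _) p)
      _ = β s ^ (1 - p) * β (s + j) ^ p := mul_comm _ _
  have hsum2 : Summable (fun j : ℕ => β s ^ (1 - p) * β (s + j) ^ p) := hsum'.mul_left _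
  have hsumβ : Summable (fun j : ℕ => β (s + j)) :=
    Summable.of_nonneg_of_le (fun j => hnn _) hstep1 hsum2
  -- Bound with constant 1
  have hbound1 : ∑' j : ℕ, β (s + j) ≤ B * (s:ℝ) ^ (-r) := by
    have hTB : B ^ p = T := by
      rw [hBdef, ← Real.rpow_mul hT0, one_div, inv_mul_cancel₀ hp.ne', Real.rpow_one]
    have hBB : B ^ (1 - p) * B ^ p = B := by
      rw [← Real.rpow_add' hB0 (by norm_num : (1 - p) + p ≠ 0)]
      norm_num
    have hexp : -(1 / p) * (1 - p) = -r := by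
      rw [hrdef]; field_simp; try ring
    calc ∑' j : ℕ, β (s + j) ≤ ∑' j : ℕ, β s ^ (1 - p) * β (s + j) ^ p :=
          Summable.tsum_le_tsum hstep1 hsumβ hsum2
      _ = β s ^ (1 - p) * ∑' j : ℕ, β (s + j) ^ p := tsum_mul_left
      _ ≤ β s ^ (1 - p) * T :=
          mul_le_mul_of_nonneg_left htail (Real.rpow_nonneg (hnn s) _)
      _ ≤ (B * ((s:ℝ) + 1) ^ (-(1 / p))) ^ (1 - p) * T := by
          apply mul_le_mul_of_nonneg_right _ hT0
          exact Real.rpow_le_rpow (hnn s) (h2 s) (by linarith)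
      _ = B ^ (1 - p) * ((s:ℝ) + 1) ^ (-(1 / p) * (1 - p)) * T := by
          rw [Real.mul_rpow hB0 (Real.rpow_nonneg (by positivity) _),
            ← Real.rpow_mul (by positivity : (0:ℝ) ≤ (s:ℝ) + 1)]
      _ = B * ((s:ℝ) + 1) ^ (-r) := by
          rw [hexp, ← hTB]
          rw [show B ^ (1 - p) * ((s:ℝ) + 1) ^ (-r) * B ^ p
              = B ^ (1 - p) * B ^ p * ((s:ℝ) + 1) ^ (-r) by ring, hBB]
      _ ≤ B * (s:ℝ) ^ (-r) := by
          apply mul_le_mul_of_nonneg_left _ hB0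
          exact Real.rpow_le_rpow_of_nonpos (by linarith) (by linarith) (by linarith)
  -- Bound with constant 1/r
  have hbound2 : ∑' j : ℕ, β (s + j) ≤ 1 / r * (B * (s:ℝ) ^ (-r)) := by
    apply Real.tsum_le_of_sum_range_le (fun j => hnn _)
    intro n
    have hstep : ∀ j : ℕ, β (s + j)
        ≤ 1 / r * B * (((s:ℝ) + j) ^ (-r) - ((s:ℝ) + (j + 1 : ℕ)) ^ (-r)) := by
      intro j
      have haj : (1:ℝ) ≤ (s:ℝ) + j := by
        have : (0:ℝ) ≤ (j:ℝ) := Nat.cast_nonneg j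
        linarith
      have h2' := h2 (s + j)
      have hcast : ((s + j : ℕ):ℝ) + 1 = (s:ℝ) + j + 1 := by push_cast; ring
      rw [hcast] at h2'
      have haux := tail_aux_tele ((s:ℝ) + j) r haj hr0
      have hrp : r + 1 = 1 / p := by rw [hrdef]; ring
      rw [hrp] at haux
      have hcast2 : ((s:ℝ) + (j + 1 : ℕ)) = (s:ℝ) + j + 1 := by push_cast; ring
      rw [hcast2]
      calc β (s + j) ≤ B * ((s:ℝ) + j + 1) ^ (-(1 / p)) := h2'
        _ = 1 / r * B * (r * ((s:ℝ) + j + 1) ^ (-(1 / p))) := by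
            field_simp
            try ring
        _ ≤ 1 / r * B * (((s:ℝ) + j) ^ (-r) - ((s:ℝ) + j + 1) ^ (-r)) := by
            apply mul_le_mul_of_nonneg_left haux (by positivity)
    calc ∑ j ∈ Finset.range n, β (s + j)
        ≤ ∑ j ∈ Finset.range n,
            1 / r * B * (((s:ℝ) + j) ^ (-r) - ((s:ℝ) + (j + 1 : ℕ)) ^ (-r)) :=
          Finset.sum_le_sum fun j _ => hstep j
      _ = 1 / r * B * ∑ j ∈ Finset.range n,
            (((s:ℝ) + j) ^ (-r) - ((s:ℝ) + (j + 1 : ℕ)) ^ (-r)) := by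
          rw [Finset.mul_sum]
      _ = 1 / r * B * (((s:ℝ) + (0:ℕ)) ^ (-r) - ((s:ℝ) + n) ^ (-r)) := by
          rw [Finset.sum_range_sub' (fun j : ℕ => ((s:ℝ) + j) ^ (-r))]
      _ ≤ 1 / r * (B * (s:ℝ) ^ (-r)) := by
          have h0 : ((s:ℝ) + (0:ℕ)) = (s:ℝ) := by push_cast; ring
          rw [h0]
          have hnn' : (0:ℝ) ≤ ((s:ℝ) + n) ^ (-r) := Real.rpow_nonneg (by positivity) _
          have hs0 : (0:ℝ) ≤ (s:ℝ) ^ (-r) := Real.rpow_nonneg (by positivity) _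
          calc 1 / r * B * ((s:ℝ) ^ (-r) - ((s:ℝ) + n) ^ (-r))
              ≤ 1 / r * B * ((s:ℝ) ^ (-r)) := by
                apply mul_le_mul_of_nonneg_left (by linarith) (by positivity)
            _ = 1 / r * (B * (s:ℝ) ^ (-r)) := by ring
  rcases le_total (1 / r) 1 with h | h
  · rw [min_eq_left h]
    calc ∑' j : ℕ, β (s + j) ≤ 1 / r * (B * (s:ℝ) ^ (-r)) := hbound2
      _ = 1 / r * B * (s:ℝ) ^ (-r) := by ring
  · rw [min_eq_right h, one_mul]
    exact hbound1
end
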